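/- Let P = ⟨x₁,…,x_m | r₁,…,rₙ⟩ be a finite presentation in which each relator rᵢ is a freely reduced and cyclically reduced word and the rᵢ are pairwise distinct, and let k ∈ ℕ, k ≥ 1. Define P_t^k = ⟨x₁,…,x_m,t | (r₁t)^k,…,(rₙt)^k, t^k⟩. Then every word in the symmetrised closure of the relator set of P_t^k is freely and cyclically reduced, and the symmetrised presentation (P_t^k)_{sym} satisfies the C'(2/k) small cancellation condition: every piece w that occurs as a subword of some relator r in the symmetrised closure satisfies |w| < (2/k)·|r|. -/

import Mathlib

/-- A word on an alphabet `β`: a list of letters with exponents `±1`. -/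
abbrev Word (β : Type*) := List (β × Bool)

/-- The formal inverse of a word. -/
def wordInv {β : Type*} (w : Word β) : Word β :=
  (w.map fun l => (l.1, !l.2)).reverse

/-- A word is freely reduced if it has no subword `x x⁻¹` or `x⁻¹ x`. -/
def Reduced {β : Type*} (w : Word β) : Prop :=
  w.Chain' fun a b => a.1 = b.1 → a.2 = b.2

/-- A word is cyclically reduced if it is freely reduced and its first letter is not the
inverse of its last letter. -/
def CyclicallyReduced {β : Type*} (w : Word β) : Prop :=
  Reduced w ∧ ∀ a ∈ w.getLast?, ∀ b ∈ w.head?, a.1 = b.1 → a.2 = b.2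

/-- `w` is obtained from `v` by a cyclic permutation. -/
def CyclicPerm {β : Type*} (v w : Word β) : Prop :=
  ∃ a b, v = a ++ b ∧ w = b ++ a

/-- The symmetrised closure of a set of words: all cyclic permutations of the words
and of their inverses. -/
def SymClosure {β : Type*} (R : Set (Word β)) : Set (Word β) :=
  {w | ∃ r ∈ R, CyclicPerm r w ∨ CyclicPerm (wordInv r) w}

/-- A piece with respect to a symmetrised set `R`: a nonempty freely reduced word that is
a common initial segment of two distinct elements of `R`. -/
def IsPiece {β : Type*} (R : Set (Word β)) (w : Word β) : Prop :=
  w ≠ [] ∧ Reduced w ∧ ∃ r₁ ∈ R, ∃ r₂ ∈ R, r₁ ≠ r₂ ∧ w <+: r₁ ∧ w <+: r₂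

/-- The `C'(λ)` small cancellation condition for a symmetrised set of words `R`:
any piece `w` occurring as a subword of some `r ∈ R` has `|w| < λ|r|`. -/
def SmallCancellation {β : Type*} (R : Set (Word β)) (lam : ℚ) : Prop :=
  ∀ w, IsPiece R w → ∀ r ∈ R, w <:+: r → (w.length : ℚ) < lam * r.length

/-- The `k`-th power of a word. -/
def powWord {β : Type*} (k : ℕ) (w : Word β) : Word β :=
  (List.replicate k w).flatten

/-- A word on `x₁, …, x_m` viewed as a word on `x₁, …, x_m, t`. -/
def embWord {m : ℕ} (w : Word (Fin m)) : Word (Fin m ⊕ Unit) :=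
  w.map fun l => (Sum.inl l.1, l.2)

/-- The letter `t`. -/
def tLetter (m : ℕ) : (Fin m ⊕ Unit) × Bool := (Sum.inr (), true)

/-- The relator set `{(r₁t)^k, …, (rₙt)^k, t^k}` of the presentation `P_t^k`. -/
def PtkRels (m n k : ℕ) (r : Fin n → Word (Fin m)) : Set (Word (Fin m ⊕ Unit)) :=
  (Set.range fun i => powWord k (embWord (r i) ++ [tLetter m])) ∪ {powWord k [tLetter m]}

namespace PtkAux

variable {β : Type*}

/-- The periodic extension of a nonempty word. -/
def pf [Inhabited β] (y : Word β) (j : ℕ) : β × Bool :=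
  y.getD (j % y.length) default

lemma pf_eq_getElem [Inhabited β] {y : Word β} (hy : y ≠ []) (j : ℕ) :
    pf y j = y[j % y.length]'(Nat.mod_lt _ (List.length_pos_iff.2 hy)) :=
  List.getD_eq_getElem _ _ _

lemma pf_congr [Inhabited β] {y : Word β} {j j' : ℕ} (h : j % y.length = j' % y.length) :
    pf y j = pf y j' := by
  unfold pf; rw [h]

lemma powWord_zero (y : Word β) : powWord 0 y = [] := rfl

lemma powWord_succ (k : ℕ) (y : Word β) : powWord (k + 1) y = y ++ powWord k y := by
  simp [powWord, List.replicate_succ]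

lemma length_powWord (k : ℕ) (y : Word β) : (powWord k y).length = k * y.length := by
  induction k with
  | zero => simp [powWord]
  | succ k ih => rw [powWord_succ, List.length_append, ih]; ring

lemma powWord_succ' (k : ℕ) (y : Word β) : powWord (k + 1) y = powWord k y ++ y := by
  simp [powWord, List.replicate_succ']

lemma wordInv_append (u v : Word β) : wordInv (u ++ v) = wordInv v ++ wordInv u := by
  simp [wordInv]

lemma wordInv_powWord (k : ℕ) (y : Word β) :
    wordInv (powWord k y) = powWord k (wordInv y) := by
  induction k with
  | zero => rfl
  | succ k ih => rw [powWord_succ', wordInv_append, ih, powWord_succ]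

lemma length_wordInv (y : Word β) : (wordInv y).length = y.length := by simp [wordInv]

lemma getElem?_powWord (k : ℕ) (y : Word β) (i : ℕ) (h : i < k * y.length) :
    (powWord k y)[i]? = y[i % y.length]? := by
  induction k generalizing i with
  | zero => simp at h
  | succ k ih =>
    rw [Nat.succ_mul] at h
    rw [powWord_succ]
    rcases lt_or_ge i y.length with hi | hi
    · rw [List.getElem?_append_left hi, Nat.mod_eq_of_lt hi]
    · rw [List.getElem?_append_right hi, ih _ (by omega),
        ← Nat.mod_eq_sub_mod hi]

lemma getElem_rotpow [Inhabited β] (k : ℕ) {y : Word β} (hy : y ≠ []) (a i : ℕ)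
    (h : i < ((powWord k y).rotate a).length) :
    ((powWord k y).rotate a)[i] = pf y (i + a) := by
  have hp : 0 < y.length := List.length_pos_iff.2 hy
  have hlen : (powWord k y).length = k * y.length := length_powWord k y
  have hlen' : 0 < (powWord k y).length := by
    rw [List.length_rotate] at h; omega
  rw [List.getElem_rotate]
  have h2 : (i + a) % (powWord k y).length < k * y.length := by
    rw [← hlen]; exact Nat.mod_lt _ hlen'
  have := getElem?_powWord k y ((i + a) % (powWord k y).length) h2
  rw [List.getElem?_eq_getElem (by omega), List.getElem?_eq_getElem
    (Nat.mod_lt _ hp)] at this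
  rw [(Option.some_inj).1 this, pf_eq_getElem hy]
  congr 1
  rw [hlen, Nat.mod_mod_of_dvd _ ⟨k, Nat.mul_comm _ _⟩]

/-- A base word: nonempty, cyclically reduced, with exactly one occurrence of the
distinguished letter `tl` per period. -/
def IsBase [Inhabited β] (y : Word β) (tl : β) : Prop :=
  y ≠ [] ∧ CyclicallyReduced y ∧
    ∃ τ < y.length, ∀ j : ℕ, ((pf y j).1 = tl ↔ j % y.length = τ)

lemma compat_pf [Inhabited β] {y : Word β} (hy : y ≠ []) (hc : CyclicallyReduced y)
    (j : ℕ) : (pf y j).1 = (pf y (j + 1)).1 → (pf y j).2 = (pf y (j + 1)).2 := by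
  have hp : 0 < y.length := List.length_pos_iff.2 hy
  have hj : j % y.length < y.length := Nat.mod_lt _ hp
  rw [pf_eq_getElem hy, pf_eq_getElem hy]
  rcases lt_or_ge (j % y.length + 1) y.length with h1 | h1
  · have he : (j + 1) % y.length = j % y.length + 1 := by
      conv_lhs => rw [← Nat.mod_add_mod]
      exact Nat.mod_eq_of_lt h1
    simp only [he]
    have := List.isChain_iff_getElem.1 hc.1 (j % y.length) (by omega)
    simpa using this
  · have e1 : j % y.length = y.length - 1 := by omega
    have e2 : (j + 1) % y.length = 0 := by
      rw [← Nat.mod_add_mod, e1, Nat.sub_add_cancel hp, Nat.mod_self]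
    have hlast : y[y.length - 1]'(by omega) ∈ y.getLast? := by
      rw [List.getLast?_eq_getElem?]
      exact Option.mem_def.2 (List.getElem?_eq_getElem _)
    have hhead : y[0]'(by omega) ∈ y.head? := by
      rw [List.head?_eq_getElem?]
      exact Option.mem_def.2 (List.getElem?_eq_getElem _)
    have := hc.2 _ hlast _ hhead
    simp only [e1, e2]
    exact this

lemma reduced_rotpow [Inhabited β] (k : ℕ) {y : Word β} (hy : y ≠ [])
    (hc : CyclicallyReduced y) (a : ℕ) : Reduced ((powWord k y).rotate a) := by
  apply List.isChain_iff_getElem.2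
  intro i h
  rw [getElem_rotpow k hy a i (by omega), getElem_rotpow k hy a (i + 1) (by omega)]
  have := compat_pf hy hc (i + a)
  rwa [show i + a + 1 = i + 1 + a by omega] at this

lemma cyclicallyReduced_rotpow [Inhabited β] {k : ℕ} (hk : 1 ≤ k) {y : Word β}
    (hy : y ≠ []) (hc : CyclicallyReduced y) (a : ℕ) :
    CyclicallyReduced ((powWord k y).rotate a) := by
  refine ⟨reduced_rotpow k hy hc a, ?_⟩
  have hp : 0 < y.length := List.length_pos_iff.2 hy
  have hlen : ((powWord k y).rotate a).length = k * y.length := by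
    rw [List.length_rotate, length_powWord]
  have hpos : 0 < ((powWord k y).rotate a).length := by
    rw [hlen]; exact Nat.mul_pos hk hp
  intro x hx b hb
  rw [List.getLast?_eq_getElem?, List.getElem?_eq_getElem (by omega)] at hx
  rw [List.head?_eq_getElem?, List.getElem?_eq_getElem (by omega)] at hb
  rw [Option.mem_def, Option.some_inj] at hx hb
  subst hx; subst hb
  rw [getElem_rotpow k hy a _ (by omega), getElem_rotpow k hy a 0 (by omega)]
  have key := compat_pf hy hc (((powWord k y).rotate a).length - 1 + a)
  have he : pf y (((powWord k y).rotate a).length - 1 + a + 1) = pf y (0 + a) := by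
    apply pf_congr
    have : ((powWord k y).rotate a).length - 1 + a + 1 = a + k * y.length := by omega
    rw [this, Nat.add_mul_mod_self_right, Nat.zero_add]
  rwa [he] at key

lemma reduced_wordInv {w : Word β} (h : Reduced w) : Reduced (wordInv w) := by
  rw [Reduced, wordInv, List.Chain', List.isChain_reverse, List.isChain_map]
  refine h.imp ?_
  intro a b hab h1
  simp only at h1 ⊢
  rw [hab h1.symm]

lemma cyclicallyReduced_wordInv {w : Word β} (h : CyclicallyReduced w) :
    CyclicallyReduced (wordInv w) := by
  refine ⟨reduced_wordInv h.1, ?_⟩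
  intro a ha b hb
  unfold wordInv at ha hb
  rw [List.getLast?_reverse, List.head?_map] at ha
  rw [List.head?_reverse, List.getLast?_map] at hb
  simp only [Option.mem_map] at ha hb
  obtain ⟨a', ha', rfl⟩ := ha
  obtain ⟨b', hb', rfl⟩ := hb
  intro h1
  simp only at h1 ⊢
  rw [h.2 b' hb' a' ha' h1.symm]

lemma isBase_wordInv [Inhabited β] {y : Word β} {tl : β} (h : IsBase y tl) :
    IsBase (wordInv y) tl := by
  obtain ⟨hne, hc, τ, hτ, hchar⟩ := h
  have hp : 0 < y.length := List.length_pos_iff.2 hne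
  have hlen : (wordInv y).length = y.length := length_wordInv y
  have hne' : wordInv y ≠ [] := List.length_pos_iff.1 (by omega)
  refine ⟨hne', cyclicallyReduced_wordInv hc, y.length - 1 - τ, by omega, ?_⟩
  intro j
  rw [pf_eq_getElem hne' j]
  simp only [wordInv, List.length_reverse, List.length_map, List.getElem_reverse,
    List.getElem_map]
  have hilt : j % y.length < y.length := Nat.mod_lt _ hp
  have hX : y.length - 1 - j % y.length < y.length := by omega
  have h2 := hchar (y.length - 1 - j % y.length)
  rw [pf_eq_getElem hne] at h2
  simp only [Nat.mod_eq_of_lt hX] at h2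
  rw [h2]
  omega

lemma isBase_singleton [Inhabited β] (c : β) (b : Bool) : IsBase [(c, b)] c := by
  refine ⟨by simp, ⟨List.isChain_singleton _, ?_⟩, 0, by simp, ?_⟩
  · intro x hx z hz
    simp at hx hz
    subst hx; subst hz
    exact fun _ => rfl
  · intro j
    have : j % 1 = 0 := Nat.mod_one j
    rw [pf_eq_getElem (by simp) j]
    simp [this]

instance {m : ℕ} : Inhabited (Fin m ⊕ Unit) := ⟨Sum.inr ()⟩

lemma isBase_emb {m : ℕ} {w : Word (Fin m)} (hc : CyclicallyReduced w) :
    IsBase (embWord w ++ [tLetter m]) (Sum.inr ()) := by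
  have hlen : (embWord w ++ [tLetter m]).length = w.length + 1 := by simp [embWord]
  have hne : embWord w ++ [tLetter m] ≠ [] := by simp
  refine ⟨hne, ⟨?_, ?_⟩, w.length, by omega, ?_⟩
  · rw [Reduced, List.Chain', List.isChain_append]
    refine ⟨?_, List.isChain_singleton _, ?_⟩
    · rw [embWord, List.isChain_map]
      refine hc.1.imp ?_
      intro a b hab h1
      simp only [Sum.inl.injEq] at h1
      exact hab h1
    · intro x hx z hz
      rw [embWord, List.getLast?_map] at hx
      simp only [Option.mem_map] at hx
      obtain ⟨x', -, rfl⟩ := hx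
      simp at hz
      subst hz
      intro h1
      simp [tLetter] at h1
  · intro x hx z hz
    rw [List.getLast?_concat] at hx
    simp only [Option.mem_def, Option.some_inj] at hx
    subst hx
    cases w with
    | nil =>
      simp [embWord] at hz
      subst hz
      exact fun _ => rfl
    | cons hd tl =>
      rw [List.head?_append_of_ne_nil _ (by simp [embWord])] at hz
      simp only [embWord, List.map_cons, List.head?_cons, Option.mem_def,
        Option.some_inj] at hz
      subst hz
      intro h1
      simp [tLetter] at h1
  · intro j
    rw [pf_eq_getElem hne j]
    have hj : j % (embWord w ++ [tLetter m]).length < w.length + 1 := by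
      rw [hlen]; exact Nat.mod_lt _ (by omega)
    rw [List.getElem_append]
    have hel : (embWord w).length = w.length := by simp [embWord]
    simp only [hlen, hel]
    have hj2 : j % (w.length + 1) < w.length + 1 := Nat.mod_lt _ (by omega)
    split_ifs with h
    · simp only [embWord, List.getElem_map]
      simp [tLetter]
      omega
    · have h0 : j % (w.length + 1) - w.length = 0 := by omega
      simp only [h0, List.getElem_singleton, tLetter]
      simp
      omega

lemma cyclicPerm_eq_rotate {v w : Word β} (h : CyclicPerm v w) : ∃ a, w = v.rotate a := by
  obtain ⟨u, x, rfl, rfl⟩ := h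
  refine ⟨u.length, ?_⟩
  rw [List.rotate_eq_drop_append_take (by simp), List.drop_left, List.take_left]

lemma exists_base_rep {m n k : ℕ} {r : Fin n → Word (Fin m)}
    (hcyc : ∀ i, CyclicallyReduced (r i)) {s : Word (Fin m ⊕ Unit)}
    (hs : s ∈ SymClosure (PtkRels m n k r)) :
    ∃ y, IsBase y (Sum.inr ()) ∧ ∃ a, s = (powWord k y).rotate a := by
  obtain ⟨r', hr', hor⟩ := hs
  have hx : ∃ x, IsBase x (Sum.inr ()) ∧ r' = powWord k x := by
    rcases hr' with ⟨i, rfl⟩ | h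
    · exact ⟨embWord (r i) ++ [tLetter m], isBase_emb (hcyc i), rfl⟩
    · rw [Set.mem_singleton_iff] at h
      exact ⟨[tLetter m], isBase_singleton _ _, h⟩
  obtain ⟨x, hxb, rfl⟩ := hx
  rcases hor with h | h
  · obtain ⟨a, rfl⟩ := cyclicPerm_eq_rotate h
    exact ⟨x, hxb, a, rfl⟩
  · rw [wordInv_powWord] at h
    obtain ⟨a, rfl⟩ := cyclicPerm_eq_rotate h
    exact ⟨wordInv x, isBase_wordInv hxb, a, rfl⟩

lemma period_eq [Inhabited β] {y y₁ : Word β} {tl : β} (hb : IsBase y tl)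
    (hb1 : IsBase y₁ tl) {w : Word β} {d a₁ : ℕ}
    (hw : ∀ i (h : i < w.length), w[i] = pf y (i + d))
    (h1 : ∀ i (h : i < w.length), w[i] = pf y₁ (i + a₁))
    (hL : 2 * y.length ≤ w.length) : y₁.length = y.length := by
  obtain ⟨hne, -, τ, hτ, hchar⟩ := hb
  obtain ⟨hne1, -, τ₁, hτ₁, hchar1⟩ := hb1
  have hp : 0 < y.length := List.length_pos_iff.2 hne
  have hp₁ : 0 < y₁.length := List.length_pos_iff.2 hne1
  set p := y.length with hpdef
  set p₁ := y₁.length with hp1def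
  have hd : d % p < p := Nat.mod_lt _ hp
  set i₁ := (p + τ - d % p) % p with hi₁def
  have hi₁ : i₁ < p := Nat.mod_lt _ hp
  have hkey : ∀ i, (i + d) % p = τ → ∀ h : i < w.length, (pf y₁ (i + a₁)).1 = tl := by
    intro i hmod hiL
    have h2 : (w[i]'hiL).1 = tl := by rw [hw i hiL]; exact (hchar (i + d)).2 hmod
    rw [h1 i hiL] at h2; exact h2
  have hkey' : ∀ i, ∀ h : i < w.length, (i + a₁) % p₁ = τ₁ → (i + d) % p = τ := by
    intro i hiL hmod
    have h2 : (w[i]'hiL).1 = tl := by rw [h1 i hiL]; exact (hchar1 (i + a₁)).2 hmod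
    rw [hw i hiL] at h2; exact (hchar (i + d)).1 h2
  have e0 : (i₁ + d) % p = τ := by
    rw [← Nat.add_mod_mod, hi₁def, Nat.mod_add_mod,
      show p + τ - d % p + d % p = p + τ by omega, Nat.add_mod_left, Nat.mod_eq_of_lt hτ]
  have e1 : (i₁ + p + d) % p = τ := by
    rw [show i₁ + p + d = i₁ + d + p by omega, Nat.add_mod_right]; exact e0
  have m1 : (i₁ + a₁) % p₁ = τ₁ := (hchar1 _).1 (hkey i₁ e0 (by omega))
  have m2 : (i₁ + p + a₁) % p₁ = τ₁ := (hchar1 _).1 (hkey (i₁ + p) e1 (by omega))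
  have hdvd : p₁ ∣ p := by
    have hme : (i₁ + a₁) ≡ (i₁ + a₁ + p) [MOD p₁] := by
      unfold Nat.ModEq
      rw [m1, show i₁ + a₁ + p = i₁ + p + a₁ by omega, m2]
    have := (Nat.modEq_iff_dvd' (Nat.le_add_right _ _)).1 hme
    simpa using this
  by_contra hne2
  have hlt : p₁ < p := lt_of_le_of_ne (Nat.le_of_dvd hp hdvd) hne2
  have m3 : (i₁ + p₁ + a₁) % p₁ = τ₁ := by
    rw [show i₁ + p₁ + a₁ = i₁ + a₁ + p₁ by omega, Nat.add_mod_right]; exact m1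
  have e2 : (i₁ + p₁ + d) % p = τ := hkey' (i₁ + p₁) (by omega) m3
  have hme2 : (i₁ + d) ≡ (i₁ + d + p₁) [MOD p] := by
    unfold Nat.ModEq
    rw [e0, show i₁ + d + p₁ = i₁ + p₁ + d by omega, e2]
  have hpd : p ∣ p₁ := by
    simpa using (Nat.modEq_iff_dvd' (Nat.le_add_right _ _)).1 hme2
  exact absurd (Nat.le_of_dvd hp₁ hpd) (by omega)

lemma rotpow_eq [Inhabited β] {k : ℕ} {y y₁ y₂ : Word β} {tl : β}
    (hb : IsBase y tl) (hb1 : IsBase y₁ tl) (hb2 : IsBase y₂ tl)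
    {w : Word β} {d a₁ a₂ : ℕ}
    (hw : ∀ i (h : i < w.length), w[i] = pf y (i + d))
    (h1 : ∀ i (h : i < w.length), w[i] = pf y₁ (i + a₁))
    (h2 : ∀ i (h : i < w.length), w[i] = pf y₂ (i + a₂))
    (hL : 2 * y.length ≤ w.length) :
    (powWord k y₁).rotate a₁ = (powWord k y₂).rotate a₂ := by
  have hp : 0 < y.length := List.length_pos_iff.2 hb.1
  have hp1eq : y₁.length = y.length := period_eq hb hb1 hw h1 hL
  have hp2eq : y₂.length = y.length := period_eq hb hb2 hw h2 hL
  apply List.ext_getElem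
  · rw [List.length_rotate, List.length_rotate, length_powWord, length_powWord,
      hp1eq, hp2eq]
  · intro i hi1 hi2
    rw [getElem_rotpow k hb1.1 a₁ i hi1, getElem_rotpow k hb2.1 a₂ i hi2]
    have him : i % y.length < w.length := by
      have := Nat.mod_lt i hp; omega
    have c1 : pf y₁ (i + a₁) = pf y₁ (i % y.length + a₁) :=
      pf_congr (by rw [hp1eq]; exact (Nat.mod_add_mod i y.length a₁).symm)
    rw [c1, ← h1 _ him, h2 _ him]
    exact pf_congr (by rw [hp2eq]; exact Nat.mod_add_mod i y.length a₂)

end PtkAux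

open PtkAux

set_option linter.unusedVariables false in
/-- Proposition: if `P = ⟨x₁,…,x_m | r₁,…,rₙ⟩` has all relators freely reduced,
cyclically reduced and distinct, and `k ≥ 1`, then every word in the symmetrised closure
of the relator set of `P_t^k = ⟨x₁,…,x_m,t | (r₁t)^k,…,(rₙt)^k, t^k⟩` is freely and
cyclically reduced, and `(P_t^k)_sym` satisfies the `C'(2/k)` small cancellation
condition. -/
theorem ptk_small_cancellation {m n k : ℕ} (hk : 1 ≤ k) (r : Fin n → Word (Fin m))
    (hred : ∀ i, Reduced (r i)) (hcyc : ∀ i, CyclicallyReduced (r i))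
    (hdist : Function.Injective r) :
    (∀ s ∈ SymClosure (PtkRels m n k r), Reduced s ∧ CyclicallyReduced s) ∧
      SmallCancellation (SymClosure (PtkRels m n k r)) (2 / (k : ℚ)) := by
  constructor
  · intro s hs
    obtain ⟨y, hb, a, rfl⟩ := exists_base_rep hcyc hs
    have h2 := cyclicallyReduced_rotpow hk hb.1 hb.2.1 a
    exact ⟨h2.1, h2⟩
  · intro w hpiece rr hrr hinf
    obtain ⟨y, hb, a, rfl⟩ := exists_base_rep hcyc hrr
    have hp : 0 < y.length := List.length_pos_iff.2 hb.1
    have hlen : ((powWord k y).rotate a).length = k * y.length := by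
      rw [List.length_rotate, length_powWord]
    have hk0 : (k : ℚ) ≠ 0 := Nat.cast_ne_zero.2 (by omega)
    have hnat : w.length < 2 * y.length := by
      by_contra hge
      push_neg at hge
      obtain ⟨-, -, r₁, hr₁, r₂, hr₂, hne12, hpre1, hpre2⟩ := hpiece
      obtain ⟨y₁, hb1, a₁, rfl⟩ := exists_base_rep hcyc hr₁
      obtain ⟨y₂, hb2, a₂, rfl⟩ := exists_base_rep hcyc hr₂
      have h1 : ∀ i (h : i < w.length), w[i] = pf y₁ (i + a₁) := by
        intro i h
        rw [hpre1.getElem h]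
        exact getElem_rotpow k hb1.1 a₁ i (by have := hpre1.length_le; omega)
      have h2 : ∀ i (h : i < w.length), w[i] = pf y₂ (i + a₂) := by
        intro i h
        rw [hpre2.getElem h]
        exact getElem_rotpow k hb2.1 a₂ i (by have := hpre2.length_le; omega)
      obtain ⟨u, v, huv⟩ := hinf
      have hw : ∀ i (h : i < w.length), w[i] = pf y (i + (u.length + a)) := by
        intro i h
        have hiu : u.length + i < ((powWord k y).rotate a).length := by
          rw [← huv]
          simp only [List.length_append]
          omega
        have e : ((powWord k y).rotate a)[u.length + i]'hiu = w[i]'h := by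
          have e2 : (u ++ w ++ v)[u.length + i]? = w[i]? := by
            rw [List.append_assoc, List.getElem?_append_right (Nat.le_add_right _ _),
              Nat.add_sub_cancel_left, List.getElem?_append_left h]
          rw [huv] at e2
          rw [List.getElem?_eq_getElem hiu, List.getElem?_eq_getElem h] at e2
          exact Option.some_inj.1 e2
        rw [← e, getElem_rotpow k hb.1 a _ hiu]
        apply pf_congr
        congr 1
        omega
      exact hne12 (rotpow_eq hb hb1 hb2 hw h1 h2 hge)
    have hcast : (2 : ℚ) / k * (((powWord k y).rotate a).length : ℚ) =
        2 * y.length := by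
      rw [hlen]
      push_cast
      field_simp
    rw [hcast]
    exact_mod_cast hnat
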